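/- For every Schwartz function f on ℂⁿ, ⟨ℒf, f⟩_{L²} = Σ_{i=1}ⁿ ‖b_i⁺ f‖²_{L²} ≥ 0, where ℒ = Σ_i b_i b_i⁺; in particular ℒ is a nonnegative formally self-adjoint operator on Schwartz functions. -/

import Mathlib

open Complex MeasureTheory
open scoped Real BigOperators

noncomputable section

/-- Wirtinger derivative `∂/∂z_j` on functions on `ℂⁿ ≅ ℝ²ⁿ`. -/
def wd {n : ℕ} (j : Fin n) (f : (Fin n → ℂ) → ℂ) (Z : Fin n → ℂ) : ℂ :=
  (1/2) * (fderiv ℝ f Z (Pi.single j 1) - Complex.I * fderiv ℝ f Z (Pi.single j Complex.I))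

/-- Wirtinger derivative `∂/∂z̄_j`. -/
def wdBar {n : ℕ} (j : Fin n) (f : (Fin n → ℂ) → ℂ) (Z : Fin n → ℂ) : ℂ :=
  (1/2) * (fderiv ℝ f Z (Pi.single j 1) + Complex.I * fderiv ℝ f Z (Pi.single j Complex.I))

/-- `b_j = -2 ∂/∂z_j + π z̄_j`. -/
def bOp {n : ℕ} (j : Fin n) (f : (Fin n → ℂ) → ℂ) (Z : Fin n → ℂ) : ℂ :=
  -2 * wd j f Z + (Real.pi : ℂ) * (starRingEnd ℂ) (Z j) * f Z

/-- `b_j⁺ = 2 ∂/∂z̄_j + π z_j`. -/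
def bPlus {n : ℕ} (j : Fin n) (f : (Fin n → ℂ) → ℂ) (Z : Fin n → ℂ) : ℂ :=
  2 * wdBar j f Z + (Real.pi : ℂ) * Z j * f Z

/-- The Gaussian kernel `𝒫(Z,Z')`. -/
def Pker {n : ℕ} (Z Z' : Fin n → ℂ) : ℂ :=
  Complex.exp (-((Real.pi : ℂ)/2) * ∑ i, ((Complex.normSq (Z i) : ℂ)
    + (Complex.normSq (Z' i) : ℂ) - 2 * Z i * (starRingEnd ℂ) (Z' i)))



section Aux

open SchwartzMap

variable {n : ℕ}

def coordCLM (i : Fin n) : (Fin n → ℂ) →L[ℝ] ℂ :=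
  (ContinuousLinearMap.proj i : (Fin n → ℂ) →L[ℂ] ℂ).restrictScalars ℝ

def conjCLM : ℂ →L[ℝ] ℂ := Complex.conjCLE.toContinuousLinearMap

def mulB : ℂ →L[ℝ] ℂ →L[ℝ] ℂ := ContinuousLinearMap.mul ℝ ℂ

def mulCoordBarS (i : Fin n) : SchwartzMap (Fin n → ℂ) ℂ →L[ℝ] SchwartzMap (Fin n → ℂ) ℂ :=
  SchwartzMap.bilinLeftCLM mulB ((conjCLM.comp (coordCLM i)).hasTemperateGrowth)

lemma mulCoordBarS_apply (i : Fin n) (f : SchwartzMap (Fin n → ℂ) ℂ) (Z : Fin n → ℂ) :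
    mulCoordBarS i f Z = f Z * (starRingEnd ℂ) (Z i) := rfl

def mulCoordS (i : Fin n) : SchwartzMap (Fin n → ℂ) ℂ →L[ℝ] SchwartzMap (Fin n → ℂ) ℂ :=
  SchwartzMap.bilinLeftCLM mulB (coordCLM i).hasTemperateGrowth

lemma mulCoordS_apply (i : Fin n) (f : SchwartzMap (Fin n → ℂ) ℂ) (Z : Fin n → ℂ) :
    mulCoordS i f Z = f Z * Z i := rfl

def conjS : SchwartzMap (Fin n → ℂ) ℂ →L[ℝ] SchwartzMap (Fin n → ℂ) ℂ :=
  SchwartzMap.bilinLeftCLM (mulB.comp conjCLM)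
    (Function.HasTemperateGrowth.const (1 : ℂ))

lemma conjS_apply (f : SchwartzMap (Fin n → ℂ) ℂ) (Z : Fin n → ℂ) :
    conjS f Z = (starRingEnd ℂ) (f Z) := mul_one _

def wdS (i : Fin n) (f : SchwartzMap (Fin n → ℂ) ℂ) : SchwartzMap (Fin n → ℂ) ℂ :=
  (2 : ℂ)⁻¹ • (LineDeriv.lineDerivOpCLM ℂ (SchwartzMap (Fin n → ℂ) ℂ) (V := Fin n → ℂ) (Pi.single i 1) f - Complex.I • LineDeriv.lineDerivOpCLM ℂ (SchwartzMap (Fin n → ℂ) ℂ) (V := Fin n → ℂ) (Pi.single i Complex.I) f)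

def wdBarS (i : Fin n) (f : SchwartzMap (Fin n → ℂ) ℂ) : SchwartzMap (Fin n → ℂ) ℂ :=
  (2 : ℂ)⁻¹ • (LineDeriv.lineDerivOpCLM ℂ (SchwartzMap (Fin n → ℂ) ℂ) (V := Fin n → ℂ) (Pi.single i 1) f + Complex.I • LineDeriv.lineDerivOpCLM ℂ (SchwartzMap (Fin n → ℂ) ℂ) (V := Fin n → ℂ) (Pi.single i Complex.I) f)

lemma wdS_apply (i : Fin n) (f : SchwartzMap (Fin n → ℂ) ℂ) : ⇑(wdS i f) = wd i ⇑f := by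
  funext Z
  simp only [wdS, wd, SchwartzMap.smul_apply, SchwartzMap.sub_apply, LineDeriv.lineDerivOpCLM_apply, SchwartzMap.lineDerivOp_apply_eq_fderiv, smul_eq_mul]
  ring

lemma wdBarS_apply (i : Fin n) (f : SchwartzMap (Fin n → ℂ) ℂ) :
    ⇑(wdBarS i f) = wdBar i ⇑f := by
  funext Z
  simp only [wdBarS, wdBar, SchwartzMap.smul_apply, SchwartzMap.add_apply, LineDeriv.lineDerivOpCLM_apply, SchwartzMap.lineDerivOp_apply_eq_fderiv,
    smul_eq_mul]
  ring

def bPlusS (i : Fin n) (f : SchwartzMap (Fin n → ℂ) ℂ) : SchwartzMap (Fin n → ℂ) ℂ :=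
  (2 : ℂ) • wdBarS i f + (Real.pi : ℂ) • mulCoordS i f

lemma bPlusS_apply (i : Fin n) (f : SchwartzMap (Fin n → ℂ) ℂ) :
    ⇑(bPlusS i f) = bPlus i ⇑f := by
  funext Z
  simp only [bPlusS, SchwartzMap.add_apply, SchwartzMap.smul_apply, smul_eq_mul,
    wdBarS_apply, mulCoordS_apply, bPlus]
  ring

def bOpS (i : Fin n) (g : SchwartzMap (Fin n → ℂ) ℂ) : SchwartzMap (Fin n → ℂ) ℂ :=
  (-2 : ℂ) • wdS i g + (Real.pi : ℂ) • mulCoordBarS i g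

lemma bOpS_apply (i : Fin n) (g : SchwartzMap (Fin n → ℂ) ℂ) : ⇑(bOpS i g) = bOp i ⇑g := by
  funext Z
  simp only [bOpS, SchwartzMap.add_apply, SchwartzMap.smul_apply, smul_eq_mul,
    wdS_apply, mulCoordBarS_apply, bOp]
  ring

lemma mul_integrable (g h : SchwartzMap (Fin n → ℂ) ℂ) :
    Integrable (fun x => g x * h x) volume :=
  (h.integrable (μ := volume)).bdd_mul g.continuous.aestronglyMeasurable
    (ae_of_all _ fun x => g.norm_le_seminorm ℝ x)

lemma ibp (g h : SchwartzMap (Fin n → ℂ) ℂ) (v : Fin n → ℂ) :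
    ∫ x, fderiv ℝ (⇑g) x v * h x = - ∫ x, g x * fderiv ℝ (⇑h) x v := by
  have hgv : Integrable (fun x => fderiv ℝ (⇑g) x v * h x) volume := by
    simpa only [LineDeriv.lineDerivOpCLM_apply, SchwartzMap.lineDerivOp_apply_eq_fderiv] using mul_integrable (LineDeriv.lineDerivOpCLM ℝ (SchwartzMap (Fin n → ℂ) ℂ) (V := Fin n → ℂ) v g) h
  have hhv : Integrable (fun x => g x * fderiv ℝ (⇑h) x v) volume := by
    simpa only [LineDeriv.lineDerivOpCLM_apply, SchwartzMap.lineDerivOp_apply_eq_fderiv] using mul_integrable g (LineDeriv.lineDerivOpCLM ℝ (SchwartzMap (Fin n → ℂ) ℂ) (V := Fin n → ℂ) v h)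
  have h0 := integral_mul_fderiv_eq_neg_fderiv_mul_of_integrable (μ := volume)
    (f := ⇑g) (g := ⇑h) (v := v) hgv hhv (mul_integrable g h) (fun x _ => g.differentiableAt) (fun x _ => h.differentiableAt)
  linear_combination h0

lemma fderiv_conj (q : SchwartzMap (Fin n → ℂ) ℂ) (x v : Fin n → ℂ) :
    fderiv ℝ (⇑(conjS q)) x v = (starRingEnd ℂ) (fderiv ℝ (⇑q) x v) := by
  have hc : ⇑(conjS q) = (⇑conjCLM) ∘ (⇑q) := by
    funext y; simp [conjS_apply, conjCLM]
  have h := (conjCLM.hasFDerivAt (x := q x)).comp x q.differentiableAt.hasFDerivAt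
  rw [hc, h.fderiv]
  simp [conjCLM]

lemma wd_conjS (i : Fin n) (q : SchwartzMap (Fin n → ℂ) ℂ) (Z : Fin n → ℂ) :
    wd i (⇑(conjS q)) Z = (starRingEnd ℂ) (wdBar i (⇑q) Z) := by
  simp only [wd, wdBar, fderiv_conj, map_mul, map_add, map_sub, map_div₀, map_one,
    map_ofNat, Complex.conj_I]
  ring

lemma integrable_wd_mul (i : Fin n) (g h : SchwartzMap (Fin n → ℂ) ℂ) :
    Integrable (fun Z => wd i (⇑g) Z * h Z) volume := by
  rw [← wdS_apply]; exact mul_integrable _ _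

lemma integrable_mul_wd (i : Fin n) (g h : SchwartzMap (Fin n → ℂ) ℂ) :
    Integrable (fun Z => g Z * wd i (⇑h) Z) volume := by
  rw [← wdS_apply]; exact mul_integrable _ _

lemma wd_adj (i : Fin n) (g h : SchwartzMap (Fin n → ℂ) ℂ) :
    ∫ x, wd i (⇑g) x * h x = - ∫ x, g x * wd i (⇑h) x := by
  have A := ibp g h (Pi.single i 1)
  have B := ibp g h (Pi.single i Complex.I)
  have A1 : Integrable (fun x => fderiv ℝ (⇑g) x (Pi.single i 1) * h x) volume := by
    simpa only [LineDeriv.lineDerivOpCLM_apply, SchwartzMap.lineDerivOp_apply_eq_fderiv] using mul_integrable (LineDeriv.lineDerivOpCLM ℝ (SchwartzMap (Fin n → ℂ) ℂ) (V := Fin n → ℂ) (Pi.single i 1) g) h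
  have A2 : Integrable (fun x => fderiv ℝ (⇑g) x (Pi.single i Complex.I) * h x) volume := by
    simpa only [LineDeriv.lineDerivOpCLM_apply, SchwartzMap.lineDerivOp_apply_eq_fderiv] using mul_integrable (LineDeriv.lineDerivOpCLM ℝ (SchwartzMap (Fin n → ℂ) ℂ) (V := Fin n → ℂ) (Pi.single i Complex.I) g) h
  have B1 : Integrable (fun x => g x * fderiv ℝ (⇑h) x (Pi.single i 1)) volume := by
    simpa only [LineDeriv.lineDerivOpCLM_apply, SchwartzMap.lineDerivOp_apply_eq_fderiv] using mul_integrable g (LineDeriv.lineDerivOpCLM ℝ (SchwartzMap (Fin n → ℂ) ℂ) (V := Fin n → ℂ) (Pi.single i 1) h)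
  have B2 : Integrable (fun x => g x * fderiv ℝ (⇑h) x (Pi.single i Complex.I)) volume := by
    simpa only [LineDeriv.lineDerivOpCLM_apply, SchwartzMap.lineDerivOp_apply_eq_fderiv] using mul_integrable g (LineDeriv.lineDerivOpCLM ℝ (SchwartzMap (Fin n → ℂ) ℂ) (V := Fin n → ℂ) (Pi.single i Complex.I) h)
  have L : ∫ x, wd i (⇑g) x * h x
      = (1/2 : ℂ) * (∫ x, fderiv ℝ (⇑g) x (Pi.single i 1) * h x)
        - (Complex.I/2) * (∫ x, fderiv ℝ (⇑g) x (Pi.single i Complex.I) * h x) := by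
    have e : (fun x => wd i (⇑g) x * h x)
        = fun x => (1/2 : ℂ) * (fderiv ℝ (⇑g) x (Pi.single i 1) * h x)
          - (Complex.I/2) * (fderiv ℝ (⇑g) x (Pi.single i Complex.I) * h x) :=
      funext fun x => by simp only [wd]; ring
    rw [e, integral_sub (A1.const_mul _) (A2.const_mul _), integral_const_mul, integral_const_mul]
  have R : ∫ x, g x * wd i (⇑h) x
      = (1/2 : ℂ) * (∫ x, g x * fderiv ℝ (⇑h) x (Pi.single i 1))
        - (Complex.I/2) * (∫ x, g x * fderiv ℝ (⇑h) x (Pi.single i Complex.I)) := by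
    have e : (fun x => g x * wd i (⇑h) x)
        = fun x => (1/2 : ℂ) * (g x * fderiv ℝ (⇑h) x (Pi.single i 1))
          - (Complex.I/2) * (g x * fderiv ℝ (⇑h) x (Pi.single i Complex.I)) :=
      funext fun x => by simp only [wd]; ring
    rw [e, integral_sub (B1.const_mul _) (B2.const_mul _), integral_const_mul, integral_const_mul]
  rw [L, R]
  linear_combination (1/2 : ℂ) * A - (Complex.I/2) * B

lemma key (i : Fin n) (f g : SchwartzMap (Fin n → ℂ) ℂ) :
    ∫ Z, bOp i (⇑g) Z * (starRingEnd ℂ) (f Z)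
      = ∫ Z, g Z * (starRingEnd ℂ) (bPlus i (⇑f) Z) := by
  set h : SchwartzMap (Fin n → ℂ) ℂ := conjS f with hh
  have hcoe : ∀ Z, h Z = (starRingEnd ℂ) (f Z) := conjS_apply f
  have I2 : Integrable (fun Z => mulCoordBarS i g Z * h Z) volume := mul_integrable _ _
  have L : ∫ Z, bOp i (⇑g) Z * (starRingEnd ℂ) (f Z)
      = (-2 : ℂ) * (∫ Z, wd i (⇑g) Z * h Z)
        + (Real.pi : ℂ) * (∫ Z, mulCoordBarS i g Z * h Z) := by
    have e : (fun Z => bOp i (⇑g) Z * (starRingEnd ℂ) (f Z))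
        = fun Z => (-2 : ℂ) * (wd i (⇑g) Z * h Z)
          + (Real.pi : ℂ) * (mulCoordBarS i g Z * h Z) :=
      funext fun Z => by simp only [bOp, hcoe, mulCoordBarS_apply]; ring
    rw [e, integral_add (((integrable_wd_mul i g h)).const_mul _) (I2.const_mul _),
      integral_const_mul, integral_const_mul]
  have R : ∫ Z, g Z * (starRingEnd ℂ) (bPlus i (⇑f) Z)
      = (2 : ℂ) * (∫ Z, g Z * wd i (⇑h) Z)
        + (Real.pi : ℂ) * (∫ Z, mulCoordBarS i g Z * h Z) := by
    have e : (fun Z => g Z * (starRingEnd ℂ) (bPlus i (⇑f) Z))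
        = fun Z => (2 : ℂ) * (g Z * wd i (⇑h) Z)
          + (Real.pi : ℂ) * (mulCoordBarS i g Z * h Z) :=
      funext fun Z => by
        have hw := wd_conjS i f Z
        rw [← hh] at hw
        simp only [bPlus, map_add, map_mul, Complex.conj_ofReal, mulCoordBarS_apply, hcoe, ← hw,
          map_ofNat]
        ring
    rw [e, integral_add ((integrable_mul_wd i g h).const_mul _) (I2.const_mul _),
      integral_const_mul, integral_const_mul]
  rw [L, R]
  linear_combination (-2 : ℂ) * wd_adj i g h

end Aux

/-- ⟨ℒ f, f⟩ = Σ_i ‖b_i⁺ f‖² ≥ 0 on Schwartz functions. -/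
theorem L_nonneg {n : ℕ} (f : SchwartzMap (Fin n → ℂ) ℂ) :
    (∫ Z : Fin n → ℂ, (∑ i, bOp i (bPlus i (⇑f)) Z) * (starRingEnd ℂ) (f Z))
      = ((∑ i, ∫ Z : Fin n → ℂ, Complex.normSq (bPlus i (⇑f) Z) : ℝ) : ℂ) ∧
    0 ≤ (∑ i, ∫ Z : Fin n → ℂ, Complex.normSq (bPlus i (⇑f) Z) : ℝ) := by
  have hb : ∀ i : Fin n, bPlus i (⇑f) = ⇑(bPlusS i f) := fun i => (bPlusS_apply i f).symm
  have per : ∀ i : Fin n, (∫ Z : Fin n → ℂ, bOp i (bPlus i (⇑f)) Z * (starRingEnd ℂ) (f Z))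
      = ((∫ Z : Fin n → ℂ, Complex.normSq (bPlus i (⇑f) Z) : ℝ) : ℂ) := by
    intro i
    rw [hb i, key i f (bPlusS i f)]
    have e : (fun Z => bPlusS i f Z * (starRingEnd ℂ) (bPlus i (⇑f) Z))
        = fun Z => ((Complex.normSq (bPlus i (⇑f) Z) : ℝ) : ℂ) := funext fun Z => by
      rw [hb i]; exact Complex.mul_conj _
    rw [e]
    simp only [hb i]
    exact integral_ofReal (𝕜 := ℂ) (f := fun Z => normSq (bPlusS i f Z))
  constructor
  · have eint : ∀ i : Fin n,
        Integrable (fun Z => bOp i (bPlus i (⇑f)) Z * (starRingEnd ℂ) (f Z)) volume := by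
      intro i
      have e : (fun Z => bOp i (bPlus i (⇑f)) Z * (starRingEnd ℂ) (f Z))
          = fun Z => bOpS i (bPlusS i f) Z * conjS f Z := funext fun Z => by
        rw [hb i, ← bOpS_apply, ← conjS_apply]
      rw [e]
      exact mul_integrable _ _
    have esum : (fun Z : Fin n → ℂ => (∑ i, bOp i (bPlus i (⇑f)) Z) * (starRingEnd ℂ) (f Z))
        = fun Z => ∑ i, bOp i (bPlus i (⇑f)) Z * (starRingEnd ℂ) (f Z) :=
      funext fun Z => Finset.sum_mul _ _ _
    rw [esum, integral_finset_sum _ fun i _ => eint i]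
    rw [Complex.ofReal_sum]
    exact Finset.sum_congr rfl fun i _ => per i
  · exact Finset.sum_nonneg fun i _ => integral_nonneg fun Z => Complex.normSq_nonneg _
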